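/- Let T be a closed subset of [0,1] containing 0 and 1, C_T the Banach space of continuous functions on T vanishing at 0 with the sup norm, and H_T the Cameron–Martin space defined via the Guseinov measure λ_Δ. Then H_T embeds continuously into C_T: for every h ∈ H_T, sup_{t∈T} |h(t)| ≤ ‖h^Δ‖_{L²(λ_Δ)} (using λ_Δ(T) = 1 and Cauchy–Schwarz), and the image of H_T is dense in C_T. -/

import Mathlib

open MeasureTheory Set
open scoped ENNReal Classical

noncomputable def rhoBar (T : Set ℝ) (t : ℝ) : ℝ :=
  if t = 0 then 0 else sSup {u | u ∈ T ∧ u < t}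

noncomputable def sigmaBar (T : Set ℝ) (t : ℝ) : ℝ :=
  if t = 1 then 1 else sInf {u | u ∈ T ∧ t < u}

noncomputable def lamDelta (T : Set ℝ) : Measure ℝ :=
  Measure.map (rhoBar T) (volume.restrict (Icc 0 1))

lemma bddAboveAux {T : Set ℝ} (hTsub : T ⊆ Icc 0 1) (x : ℝ) :
    BddAbove {u | u ∈ T ∧ u < x} :=
  ⟨1, fun u hu => (hTsub hu.1).2⟩

lemma rhoBar_nonneg {T : Set ℝ} (hTsub : T ⊆ Icc 0 1) (h0T : (0:ℝ) ∈ T) (x : ℝ) :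
    0 ≤ rhoBar T x := by
  unfold rhoBar
  split_ifs with h
  · exact le_refl 0
  rcases lt_or_gt_of_ne h with hx | hx
  · have : {u | u ∈ T ∧ u < x} = ∅ := by
      ext u; simp only [mem_setOf_eq, mem_empty_iff_false, iff_false, not_and]
      intro hu; linarith [(hTsub hu).1]
    rw [this, Real.sSup_empty]
  · exact le_csSup (bddAboveAux hTsub x) ⟨h0T, hx⟩

lemma rhoBar_mono {T : Set ℝ} (hTsub : T ⊆ Icc 0 1) (h0T : (0:ℝ) ∈ T) :
    Monotone (rhoBar T) := by
  intro s t hst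
  rcases eq_or_lt_of_le hst with rfl | hlt
  · exact le_refl _
  by_cases hs : s ≤ 0
  · have h1 : rhoBar T s ≤ 0 := by
      unfold rhoBar
      split_ifs with h
      · exact le_refl 0
      have he : {u | u ∈ T ∧ u < s} = ∅ := by
        ext u; simp only [mem_setOf_eq, mem_empty_iff_false, iff_false, not_and]
        intro hu hc; have h01 := (hTsub hu).1; linarith
      rw [he, Real.sSup_empty]
    exact le_trans h1 (rhoBar_nonneg hTsub h0T t)
  · push_neg at hs
    have hs' : s ≠ 0 := ne_of_gt hs
    have ht' : t ≠ 0 := by intro h; rw [h] at hlt; linarith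
    unfold rhoBar
    rw [if_neg hs', if_neg ht']
    refine csSup_le_csSup (bddAboveAux hTsub t) ⟨0, h0T, hs⟩ ?_
    intro u hu; exact ⟨hu.1, lt_trans hu.2 hlt⟩

lemma rhoBar_mem {T : Set ℝ} (hT : IsClosed T) (hTsub : T ⊆ Icc 0 1)
    (h0T : (0:ℝ) ∈ T) {x : ℝ} (hx0 : 0 ≤ x) : rhoBar T x ∈ T := by
  unfold rhoBar
  split_ifs with h
  · exact h0T
  have hxpos : 0 < x := lt_of_le_of_ne hx0 (Ne.symm h)
  have hne : {u | u ∈ T ∧ u < x}.Nonempty := ⟨0, h0T, hxpos⟩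
  have h1 : sSup {u | u ∈ T ∧ u < x} ∈ closure {u | u ∈ T ∧ u < x} :=
    csSup_mem_closure hne (bddAboveAux hTsub x)
  have h2 : closure {u | u ∈ T ∧ u < x} ⊆ T := by
    calc closure {u | u ∈ T ∧ u < x} ⊆ closure T := closure_mono fun u hu => hu.1
    _ = T := hT.closure_eq
  exact h2 h1

lemma rhoBar_le_self {T : Set ℝ} (h0T : (0:ℝ) ∈ T) {x : ℝ} (hx0 : 0 ≤ x) :
    rhoBar T x ≤ x := by
  unfold rhoBar
  split_ifs with h
  · exact le_of_eq h.symm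
  exact csSup_le ⟨0, h0T, lt_of_le_of_ne hx0 (Ne.symm h)⟩ fun u hu => le_of_lt hu.2

lemma le_rhoBar {T : Set ℝ} (hTsub : T ⊆ Icc 0 1) {b x : ℝ} (hb : b ∈ T) (hbx : b < x)
    (hx : x ≠ 0) : b ≤ rhoBar T x := by
  unfold rhoBar
  rw [if_neg hx]
  exact le_csSup (bddAboveAux hTsub x) ⟨hb, hbx⟩

lemma rhoBar_measurable {T : Set ℝ} (hTsub : T ⊆ Icc 0 1) (h0T : (0:ℝ) ∈ T) :
    Measurable (rhoBar T) :=
  (rhoBar_mono hTsub h0T).measurable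

lemma lamDelta_Ico0 {T : Set ℝ} (hT : IsClosed T) (hTsub : T ⊆ Icc 0 1)
    (h0T : (0:ℝ) ∈ T) {b : ℝ} (hb : b ∈ T) :
    lamDelta T (Ico 0 b ∩ T) = ENNReal.ofReal b := by
  have hb01 := hTsub hb
  have hmeas : MeasurableSet (Ico (0:ℝ) b ∩ T) := measurableSet_Ico.inter hT.measurableSet
  rw [lamDelta, Measure.map_apply (rhoBar_measurable hTsub h0T) hmeas,
    Measure.restrict_apply' measurableSet_Icc]
  have hsub1 : Ico (0:ℝ) b ⊆ (rhoBar T ⁻¹' (Ico 0 b ∩ T)) ∩ Icc 0 1 := by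
    intro x hx
    refine ⟨⟨⟨rhoBar_nonneg hTsub h0T x, lt_of_le_of_lt (rhoBar_le_self h0T hx.1) hx.2⟩,
      rhoBar_mem hT hTsub h0T hx.1⟩, hx.1, le_trans (le_of_lt hx.2) hb01.2⟩
  have hsub2 : (rhoBar T ⁻¹' (Ico 0 b ∩ T)) ∩ Icc 0 1 ⊆ Icc 0 b := by
    intro x hx
    refine ⟨hx.2.1, ?_⟩
    by_contra h
    push_neg at h
    have hx0 : x ≠ 0 := by intro hc; rw [hc] at h; linarith [hb01.1]
    exact absurd (le_rhoBar hTsub hb h hx0) (not_le.mpr hx.1.1.2)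
  refine le_antisymm ?_ ?_
  · calc volume ((rhoBar T ⁻¹' (Ico 0 b ∩ T)) ∩ Icc 0 1) ≤ volume (Icc 0 b) :=
      measure_mono hsub2
    _ = ENNReal.ofReal b := by rw [Real.volume_Icc, sub_zero]
  · calc ENNReal.ofReal b = volume (Ico (0:ℝ) b) := by rw [Real.volume_Ico, sub_zero]
    _ ≤ volume ((rhoBar T ⁻¹' (Ico 0 b ∩ T)) ∩ Icc 0 1) := measure_mono hsub1

lemma lamDelta_univ {T : Set ℝ} (hTsub : T ⊆ Icc 0 1) (h0T : (0:ℝ) ∈ T) :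
    lamDelta T univ = 1 := by
  rw [lamDelta, Measure.map_apply (rhoBar_measurable hTsub h0T) MeasurableSet.univ,
    preimage_univ, Measure.restrict_apply MeasurableSet.univ, univ_inter, Real.volume_Icc]
  norm_num

lemma lamDelta_prob {T : Set ℝ} (hTsub : T ⊆ Icc 0 1) (h0T : (0:ℝ) ∈ T) :
    IsProbabilityMeasure (lamDelta T) :=
  ⟨lamDelta_univ hTsub h0T⟩

lemma lamDelta_IcoT {T : Set ℝ} (hT : IsClosed T) (hTsub : T ⊆ Icc 0 1)
    (h0T : (0:ℝ) ∈ T) {a b : ℝ} (ha : a ∈ T) (hb : b ∈ T) (hab : a ≤ b) :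
    lamDelta T (Ico a b ∩ T) = ENNReal.ofReal (b - a) := by
  have ha01 := hTsub ha
  have key : (Ico (0:ℝ) a ∩ T) ∪ (Ico a b ∩ T) = Ico 0 b ∩ T := by
    rw [← union_inter_distrib_right, Ico_union_Ico_eq_Ico ha01.1 hab]
  have hdisj : Disjoint (Ico (0:ℝ) a ∩ T) (Ico a b ∩ T) := by
    rw [Set.disjoint_left]
    rintro x ⟨hx1, -⟩ ⟨hx2, -⟩
    exact absurd hx2.1 (not_le.mpr hx1.2)
  have hmeas2 : MeasurableSet (Ico a b ∩ T) := measurableSet_Ico.inter hT.measurableSet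
  have hsum := measure_union (μ := lamDelta T) hdisj hmeas2
  rw [key, lamDelta_Ico0 hT hTsub h0T hb, lamDelta_Ico0 hT hTsub h0T ha] at hsum
  rw [ENNReal.ofReal_sub _ ha01.1]
  exact ENNReal.eq_sub_of_add_eq ENNReal.ofReal_ne_top (by rw [add_comm]; exact hsum.symm)

lemma part1_aux {T : Set ℝ} (hT : IsClosed T) (hTsub : T ⊆ Icc 0 1) (h0T : (0:ℝ) ∈ T)
    (f : ℝ → ℝ) (hf : MemLp f 2 (lamDelta T)) (t : ℝ) :
    |∫ s in Ico (0:ℝ) t ∩ T, f s ∂(lamDelta T)|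
      ≤ Real.sqrt (∫ s, (f s)^2 ∂(lamDelta T)) := by
  haveI := lamDelta_prob hTsub h0T
  set μ := lamDelta T with hμ
  have hf1 : Integrable f μ := hf.integrable one_le_two
  have hf2 : Integrable (fun s => f s ^ 2) μ := hf.integrable_sq
  have habs : Integrable (fun s => |f s|) μ := hf1.abs
  set c := ∫ s, |f s| ∂μ with hc
  have hc0 : 0 ≤ c := integral_nonneg fun s => abs_nonneg _
  have hy : 0 ≤ ∫ s, f s ^ 2 ∂μ := integral_nonneg fun s => sq_nonneg _
  have step1 : |∫ s in Ico (0:ℝ) t ∩ T, f s ∂μ| ≤ c := by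
    calc |∫ s in Ico (0:ℝ) t ∩ T, f s ∂μ| ≤ ∫ s in Ico (0:ℝ) t ∩ T, |f s| ∂μ := by
          simpa [Real.norm_eq_abs] using
            norm_integral_le_integral_norm (μ := μ.restrict (Ico (0:ℝ) t ∩ T)) f
    _ ≤ c := setIntegral_le_integral habs (ae_of_all _ fun s => abs_nonneg _)
  have e1 : Integrable (fun s => 2 * c * |f s|) μ := habs.const_mul _
  have expand : (fun s => (|f s| - c)^2) = fun s => (f s ^ 2 - 2 * c * |f s|) + c ^ 2 := by
    funext s
    rw [← sq_abs (f s)]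
    ring
  have hval : ∫ s, (|f s| - c)^2 ∂μ = ∫ s, f s ^ 2 ∂μ - 2 * c * c + c ^ 2 := by
    have e2 : Integrable (fun s => f s ^ 2 - 2 * c * |f s|) μ := hf2.sub e1
    rw [expand, integral_add e2 (integrable_const _), integral_sub hf2 e1,
      integral_const_mul, integral_const, measureReal_def, measure_univ, ENNReal.toReal_one, one_smul, ← hc]
  have hnonneg : 0 ≤ ∫ s, (|f s| - c)^2 ∂μ := integral_nonneg fun s => sq_nonneg _
  have step2 : c ^ 2 ≤ ∫ s, f s ^ 2 ∂μ := by nlinarith [hval ▸ hnonneg]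
  exact le_trans step1 ((Real.le_sqrt hc0 hy).mpr step2)

noncomputable def prevT (T : Set ℝ) (u : ℝ) : ℝ := sSup (T ∩ Iic u)
noncomputable def nextT (T : Set ℝ) (u : ℝ) : ℝ := sInf (T ∩ Ici u)

lemma prevT_mem {T : Set ℝ} (hT : IsClosed T) (hTsub : T ⊆ Icc 0 1) (h0T : (0:ℝ) ∈ T)
    {u : ℝ} (hu : 0 ≤ u) : prevT T u ∈ T ∩ Iic u :=
  (hT.inter isClosed_Iic).csSup_mem ⟨0, h0T, hu⟩ ⟨1, fun x hx => (hTsub hx.1).2⟩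

lemma le_prevT {T : Set ℝ} (hTsub : T ⊆ Icc 0 1) {u t : ℝ} (ht : t ∈ T) (htu : t ≤ u) :
    t ≤ prevT T u :=
  le_csSup ⟨1, fun x hx => (hTsub hx.1).2⟩ ⟨ht, htu⟩

lemma nextT_mem {T : Set ℝ} (hT : IsClosed T) (hTsub : T ⊆ Icc 0 1) (h1T : (1:ℝ) ∈ T)
    {u : ℝ} (hu : u ≤ 1) : nextT T u ∈ T ∩ Ici u :=
  (hT.inter isClosed_Ici).csInf_mem ⟨1, h1T, hu⟩ ⟨0, fun x hx => (hTsub hx.1).1⟩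

lemma nextT_le {T : Set ℝ} (hTsub : T ⊆ Icc 0 1) {u t : ℝ} (ht : t ∈ T) (htu : u ≤ t) :
    nextT T u ≤ t :=
  csInf_le ⟨0, fun x hx => (hTsub hx.1).1⟩ ⟨ht, htu⟩

lemma min_mem_T {T : Set ℝ} {a b : ℝ} (ha : a ∈ T) (hb : b ∈ T) : min a b ∈ T := by
  rcases le_total a b with h | h
  · rw [min_eq_left h]; exact ha
  · rw [min_eq_right h]; exact hb

lemma term_integral {T : Set ℝ} (hT : IsClosed T) (hTsub : T ⊆ Icc 0 1) (h0T : (0:ℝ) ∈ T)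
    {a b t : ℝ} (ha : a ∈ T) (hb : b ∈ T) (hab : a ≤ b) (ht : t ∈ T) (c : ℝ) :
    ∫ s in Ico (0:ℝ) t ∩ T, (Ico a b).indicator (fun _ => c) s ∂(lamDelta T)
      = c * (min b t - min a t) := by
  have hmeasS : MeasurableSet (Ico (0:ℝ) t ∩ T) := measurableSet_Ico.inter hT.measurableSet
  rw [integral_indicator_const c measurableSet_Ico, measureReal_restrict_apply measurableSet_Ico, measureReal_def]
  have hset : Ico a b ∩ (Ico (0:ℝ) t ∩ T) = Ico a (min b t) ∩ T := by
    ext x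
    simp only [mem_inter_iff, mem_Ico, lt_min_iff]
    constructor
    · rintro ⟨⟨h1, h2⟩, ⟨h3, h4⟩, h5⟩
      exact ⟨⟨h1, h2, h4⟩, h5⟩
    · rintro ⟨⟨h1, h2, h3⟩, h5⟩
      exact ⟨⟨h1, h2⟩, ⟨le_trans (hTsub ha).1 h1, h3⟩, h5⟩
  rw [hset]
  by_cases hu : a ≤ min b t
  · have hminT : min b t ∈ T := min_mem_T hb ht
    rw [lamDelta_IcoT hT hTsub h0T ha hminT hu, ENNReal.toReal_ofReal (by linarith)]
    have hat : a ≤ t := le_trans hu (min_le_right _ _)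
    rw [min_eq_left hat] at *
    rw [smul_eq_mul, mul_comm]
  · push_neg at hu
    have hIempty : Ico a (min b t) = ∅ := Ico_eq_empty (by intro h; exact absurd (le_of_lt h) (not_le.mpr hu))
    rw [hIempty, empty_inter, measure_empty, ENNReal.toReal_zero, zero_smul]
    have hbt : min b t = t := by
      rcases le_total b t with h | h
      · exfalso; rw [min_eq_left h] at hu; linarith
      · exact min_eq_right h
    have hta : t < a := by rw [hbt] at hu; exact hu
    rw [hbt, min_eq_right (le_of_lt hta), sub_self, mul_zero]

noncomputable def partP (T : Set ℝ) (n : ℕ) : Finset ℝ :=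
  ((Finset.range (n+1)).image fun i : ℕ => prevT T ((i:ℝ)/n)) ∪
    ((Finset.range (n+1)).image fun i : ℕ => nextT T ((i:ℝ)/n))

noncomputable def qf (T : Set ℝ) (n : ℕ) (i : ℕ) : ℝ :=
  ((partP T n).sort (· ≤ ·)).getD i 1

lemma grid_mem {n i : ℕ} (hn : 0 < n) (hi : i ≤ n) : (i:ℝ)/n ∈ Icc (0:ℝ) 1 := by
  have hn0 : (0:ℝ) < n := by exact_mod_cast hn
  constructor
  · positivity
  · rw [div_le_one hn0]; exact_mod_cast hi

lemma partP_subset_T {T : Set ℝ} {n : ℕ} (hT : IsClosed T) (hTsub : T ⊆ Icc 0 1)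
    (h0T : (0:ℝ) ∈ T) (h1T : (1:ℝ) ∈ T) (hn : 0 < n) : ∀ p ∈ partP T n, p ∈ T := by
  intro p hp
  rw [partP, Finset.mem_union] at hp
  rcases hp with hp | hp <;> rw [Finset.mem_image] at hp <;>
    obtain ⟨i, hi, rfl⟩ := hp <;> rw [Finset.mem_range] at hi <;>
    have hg := grid_mem hn (Nat.lt_succ_iff.mp hi)
  · exact (prevT_mem hT hTsub h0T hg.1).1
  · exact (nextT_mem hT hTsub h1T hg.2).1

lemma zero_mem_partP {T : Set ℝ} {n : ℕ} (hT : IsClosed T) (hTsub : T ⊆ Icc 0 1)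
    (h0T : (0:ℝ) ∈ T) (hn : 0 < n) : (0:ℝ) ∈ partP T n := by
  have h0 : prevT T ((0:ℕ):ℝ)/(n:ℝ)*0 = 0 := by ring
  have hval : prevT T (((0:ℕ):ℝ)/n) = 0 := by
    have : (((0:ℕ):ℝ)/n) = 0 := by norm_num
    rw [this]
    have hmem := prevT_mem hT hTsub h0T (le_refl (0:ℝ))
    exact le_antisymm hmem.2 (hTsub hmem.1).1
  rw [partP, Finset.mem_union]
  left
  rw [Finset.mem_image]
  exact ⟨0, Finset.mem_range.mpr (Nat.succ_pos n), hval⟩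

lemma one_mem_partP {T : Set ℝ} {n : ℕ} (hT : IsClosed T) (hTsub : T ⊆ Icc 0 1)
    (h1T : (1:ℝ) ∈ T) (hn : 0 < n) : (1:ℝ) ∈ partP T n := by
  have hval : nextT T (((n:ℕ):ℝ)/n) = 1 := by
    have hne : (n:ℝ) ≠ 0 := by exact_mod_cast hn.ne'
    have h1 : (((n:ℕ):ℝ)/n) = 1 := div_self hne
    rw [h1]
    have hmem := nextT_mem hT hTsub h1T (le_refl (1:ℝ))
    exact le_antisymm (hTsub hmem.1).2 hmem.2
  rw [partP, Finset.mem_union]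
  right
  rw [Finset.mem_image]
  exact ⟨n, Finset.mem_range.mpr (Nat.lt_succ_self n), hval⟩

lemma qf_mem_T {T : Set ℝ} {n : ℕ} (hT : IsClosed T) (hTsub : T ⊆ Icc 0 1)
    (h0T : (0:ℝ) ∈ T) (h1T : (1:ℝ) ∈ T) (hn : 0 < n) (i : ℕ) : qf T n i ∈ T := by
  rw [qf]
  by_cases h : i < ((partP T n).sort (· ≤ ·)).length
  · rw [List.getD_eq_getElem _ _ h]
    exact partP_subset_T hT hTsub h0T h1T hn _
      (Finset.mem_sort (· ≤ ·) |>.mp (List.getElem_mem h))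
  · rw [List.getD_eq_default _ _ (le_of_not_gt h)]
    exact h1T

lemma qf_le_one {T : Set ℝ} {n : ℕ} (hT : IsClosed T) (hTsub : T ⊆ Icc 0 1)
    (h0T : (0:ℝ) ∈ T) (h1T : (1:ℝ) ∈ T) (hn : 0 < n) (i : ℕ) : qf T n i ≤ 1 :=
  (hTsub (qf_mem_T hT hTsub h0T h1T hn i)).2

lemma qf_nonneg {T : Set ℝ} {n : ℕ} (hT : IsClosed T) (hTsub : T ⊆ Icc 0 1)
    (h0T : (0:ℝ) ∈ T) (h1T : (1:ℝ) ∈ T) (hn : 0 < n) (i : ℕ) : 0 ≤ qf T n i :=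
  (hTsub (qf_mem_T hT hTsub h0T h1T hn i)).1

lemma qf_mono {T : Set ℝ} {n : ℕ} (hT : IsClosed T) (hTsub : T ⊆ Icc 0 1)
    (h0T : (0:ℝ) ∈ T) (h1T : (1:ℝ) ∈ T) (hn : 0 < n) : Monotone (qf T n) := by
  intro i j hij
  by_cases hj : j < ((partP T n).sort (· ≤ ·)).length
  · have hi : i < ((partP T n).sort (· ≤ ·)).length := lt_of_le_of_lt hij hj
    rw [qf, qf, List.getD_eq_getElem _ _ hi, List.getD_eq_getElem _ _ hj]
    exact List.Pairwise.rel_get_of_le ((partP T n).pairwise_sort (· ≤ ·))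
      (by rw [Fin.mk_le_mk]; exact hij)
  · rw [show qf T n j = ((partP T n).sort (· ≤ ·)).getD j 1 from rfl,
      List.getD_eq_default _ _ (le_of_not_gt hj)]
    exact qf_le_one hT hTsub h0T h1T hn i

lemma qf_strict {T : Set ℝ} {n : ℕ} {i : ℕ}
    (h : i + 1 < ((partP T n).sort (· ≤ ·)).length) : qf T n i < qf T n (i+1) := by
  rw [qf, qf, List.getD_eq_getElem _ _ (Nat.lt_of_succ_lt h), List.getD_eq_getElem _ _ h]
  exact List.Pairwise.rel_get_of_lt ((partP T n).sortedLT_sort.pairwise)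
    (by rw [Fin.mk_lt_mk]; exact Nat.lt_succ_self i)

lemma qf_zero {T : Set ℝ} {n : ℕ} (hT : IsClosed T) (hTsub : T ⊆ Icc 0 1)
    (h0T : (0:ℝ) ∈ T) (h1T : (1:ℝ) ∈ T) (hn : 0 < n) : qf T n 0 = 0 := by
  have h0l : (0:ℝ) ∈ (partP T n).sort (· ≤ ·) :=
    (Finset.mem_sort (· ≤ ·)).mpr (zero_mem_partP hT hTsub h0T hn)
  have hlen : 0 < ((partP T n).sort (· ≤ ·)).length :=
    List.length_pos_iff.mpr (List.ne_nil_of_mem h0l)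
  obtain ⟨k, hk⟩ := List.mem_iff_get.mp h0l
  refine le_antisymm ?_ (qf_nonneg hT hTsub h0T h1T hn 0)
  rw [qf, List.getD_eq_getElem _ _ hlen]
  calc ((partP T n).sort (· ≤ ·)).get ⟨0, hlen⟩ ≤ ((partP T n).sort (· ≤ ·)).get k :=
        List.Pairwise.rel_get_of_le ((partP T n).pairwise_sort (· ≤ ·))
          (by rw [Fin.le_def]; exact Nat.zero_le _)
  _ = 0 := hk

lemma qf_last {T : Set ℝ} {n : ℕ} (hT : IsClosed T) (hTsub : T ⊆ Icc 0 1)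
    (h0T : (0:ℝ) ∈ T) (h1T : (1:ℝ) ∈ T) (hn : 0 < n) (i : ℕ)
    (hi : ((partP T n).sort (· ≤ ·)).length - 1 ≤ i) : qf T n i = 1 := by
  by_cases h : i < ((partP T n).sort (· ≤ ·)).length
  · have h1l : (1:ℝ) ∈ (partP T n).sort (· ≤ ·) :=
      (Finset.mem_sort (· ≤ ·)).mpr (one_mem_partP hT hTsub h1T hn)
    obtain ⟨k, hk⟩ := List.mem_iff_get.mp h1l
    refine le_antisymm (qf_le_one hT hTsub h0T h1T hn i) ?_
    rw [qf, List.getD_eq_getElem _ _ h]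
    calc (1:ℝ) = ((partP T n).sort (· ≤ ·)).get k := hk.symm
    _ ≤ ((partP T n).sort (· ≤ ·)).get ⟨i, h⟩ :=
        List.Pairwise.rel_get_of_le ((partP T n).pairwise_sort (· ≤ ·))
          (by rw [Fin.le_def]; exact le_trans (Nat.le_pred_of_lt k.isLt) hi)
  · rw [qf, List.getD_eq_default _ _ (le_of_not_gt h)]

lemma length_ge_two {T : Set ℝ} {n : ℕ} (hT : IsClosed T) (hTsub : T ⊆ Icc 0 1)
    (h0T : (0:ℝ) ∈ T) (h1T : (1:ℝ) ∈ T) (hn : 0 < n) :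
    2 ≤ ((partP T n).sort (· ≤ ·)).length := by
  rw [Finset.length_sort]
  have hsub : ({0, 1} : Finset ℝ) ⊆ partP T n := by
    intro x hx
    rcases Finset.mem_insert.mp hx with rfl | hx
    · exact zero_mem_partP hT hTsub h0T hn
    · rw [Finset.mem_singleton] at hx; subst hx
      exact one_mem_partP hT hTsub h1T hn
  calc 2 = ({0, 1} : Finset ℝ).card := by
        rw [Finset.card_insert_of_notMem (by norm_num), Finset.card_singleton]
  _ ≤ (partP T n).card := Finset.card_le_card hsub

lemma no_between {T : Set ℝ} {n : ℕ} (hT : IsClosed T) (hTsub : T ⊆ Icc 0 1)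
    (h0T : (0:ℝ) ∈ T) (h1T : (1:ℝ) ∈ T) (hn : 0 < n) {p : ℝ} (hp : p ∈ partP T n)
    (i : ℕ) : ¬(qf T n i < p ∧ p < qf T n (i+1)) := by
  rintro ⟨hlt1, hlt2⟩
  have hpT : p ∈ T := partP_subset_T hT hTsub h0T h1T hn p hp
  have hp1 : p ≤ 1 := (hTsub hpT).2
  have hi1 : i + 1 < ((partP T n).sort (· ≤ ·)).length := by
    by_contra hcon
    push_neg at hcon
    have : ((partP T n).sort (· ≤ ·)).length - 1 ≤ i := by omega
    rw [qf_last hT hTsub h0T h1T hn i this] at hlt1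
    linarith
  have hi : i < ((partP T n).sort (· ≤ ·)).length := Nat.lt_of_succ_lt hi1
  obtain ⟨k, hk⟩ := List.mem_iff_get.mp ((Finset.mem_sort (· ≤ ·)).mpr hp)
  rcases lt_or_ge k.1 (i+1) with hki | hki
  · have hki' : k.1 ≤ i := Nat.lt_succ_iff.mp hki
    have : p ≤ qf T n i := by
      rw [qf, List.getD_eq_getElem _ _ hi, ← hk]
      exact List.Pairwise.rel_get_of_le ((partP T n).pairwise_sort (· ≤ ·))
        (by rw [Fin.le_def]; exact hki')
    linarith
  · have : qf T n (i+1) ≤ p := by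
      rw [qf, List.getD_eq_getElem _ _ hi1, ← hk]
      exact List.Pairwise.rel_get_of_le ((partP T n).pairwise_sort (· ≤ ·))
        (by rw [Fin.le_def]; exact hki)
    linarith

lemma gap_lemma {T : Set ℝ} {n : ℕ} (hT : IsClosed T) (hTsub : T ⊆ Icc 0 1)
    (h0T : (0:ℝ) ∈ T) (h1T : (1:ℝ) ∈ T) (hn : 0 < n) (i : ℕ) {t : ℝ} (htT : t ∈ T)
    (h1 : qf T n i < t) (h2 : t < qf T n (i+1)) :
    qf T n (i+1) - qf T n i ≤ 1 / n := by
  by_contra hbig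
  push_neg at hbig
  set a := qf T n i with ha
  set b := qf T n (i+1) with hb
  have hn0 : (0:ℝ) < n := by exact_mod_cast hn
  have ha0 : 0 ≤ a := qf_nonneg hT hTsub h0T h1T hn i
  have hb1 : b ≤ 1 := qf_le_one hT hTsub h0T h1T hn (i+1)
  set i' : ℕ := ⌊(n:ℝ) * a⌋₊ + 1 with hi'
  have hna0 : 0 ≤ (n:ℝ) * a := by positivity
  have hg1 : a < (i':ℝ) / n := by
    rw [lt_div_iff₀ hn0]
    have hfl := Nat.lt_floor_add_one ((n:ℝ) * a)
    push_cast [hi']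
    nlinarith
  have hg2 : (i':ℝ) / n ≤ a + 1 / n := by
    rw [div_le_iff₀ hn0]
    have hfl := Nat.floor_le hna0
    have hexp : (a + 1/(n:ℝ)) * n = a * n + 1 := by field_simp
    push_cast [hi']
    nlinarith
  have hg3 : (i':ℝ) / n < b := by
    calc (i':ℝ) / n ≤ a + 1 / n := hg2
    _ < a + (b - a) := by linarith
    _ = b := by ring
  have hi'n : i' ≤ n := by
    have : (i':ℝ) < n := by
      have h1n : (i':ℝ)/n < 1 := lt_of_lt_of_le hg3 hb1
      rw [div_lt_one hn0] at h1n
      exact h1n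
    exact_mod_cast le_of_lt this
  have hg01 : (i':ℝ)/n ∈ Icc (0:ℝ) 1 := grid_mem hn hi'n
  rcases le_or_gt t ((i':ℝ)/n) with hcase | hcase
  · set p := prevT T ((i':ℝ)/n) with hp
    have hpP : p ∈ partP T n := by
      rw [partP, Finset.mem_union]
      left
      rw [Finset.mem_image]
      exact ⟨i', Finset.mem_range.mpr (Nat.lt_succ_of_le hi'n), rfl⟩
    have hmem := prevT_mem hT hTsub h0T hg01.1
    have htp : t ≤ p := le_prevT hTsub htT hcase
    exact no_between hT hTsub h0T h1T hn hpP i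
      ⟨lt_of_lt_of_le h1 htp, lt_of_le_of_lt hmem.2 hg3⟩
  · set p := nextT T ((i':ℝ)/n) with hp
    have hpP : p ∈ partP T n := by
      rw [partP, Finset.mem_union]
      right
      rw [Finset.mem_image]
      exact ⟨i', Finset.mem_range.mpr (Nat.lt_succ_of_le hi'n), rfl⟩
    have hmem := nextT_mem hT hTsub h1T hg01.2
    have hpt : p ≤ t := nextT_le hTsub htT (le_of_lt hcase)
    exact no_between hT hTsub h0T h1T hn hpP i
      ⟨lt_of_lt_of_le hg1 hmem.2, lt_of_le_of_lt hpt h2⟩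

lemma part2_aux {T : Set ℝ} (hT : IsClosed T) (hTsub : T ⊆ Icc 0 1)
    (h0T : (0:ℝ) ∈ T) (h1T : (1:ℝ) ∈ T) (ω : ℝ → ℝ) (hω : ContinuousOn ω T)
    (hω0 : ω 0 = 0) (ε : ℝ) (hε : 0 < ε) :
    ∃ hΔ : ℝ → ℝ, MemLp hΔ 2 (lamDelta T) ∧
      ∀ t ∈ T, |ω t - ∫ s in Ico (0:ℝ) t ∩ T, hΔ s ∂(lamDelta T)| < ε := by
  haveI := lamDelta_prob hTsub h0T
  have hTcomp : IsCompact T := isCompact_Icc.of_isClosed_subset hT hTsub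
  have huc := hTcomp.uniformContinuousOn_of_continuous hω
  rw [Metric.uniformContinuousOn_iff] at huc
  obtain ⟨δ, hδ0, hδ⟩ := huc (ε/3) (by linarith)
  obtain ⟨n', hn'⟩ := exists_nat_one_div_lt hδ0
  set n : ℕ := n' + 1 with hn
  have hnpos : 0 < n := Nat.succ_pos n'
  have hinv : 1/(n:ℝ) < δ := by
    have : ((n:ℝ)) = (n':ℝ) + 1 := by push_cast [hn]; ring
    rw [this]; exact hn'
  set M := ((partP T n).sort (· ≤ ·)).length with hM
  have hM2 : 2 ≤ M := length_ge_two hT hTsub h0T h1T hnpos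
  set m := M - 1 with hm
  have hm1 : 1 ≤ m := by omega
  set c : ℕ → ℝ := fun i =>
    (ω (qf T n (i+1)) - ω (qf T n i)) / (qf T n (i+1) - qf T n i) with hc
  set f : ℕ → ℝ → ℝ := fun i =>
    (Ico (qf T n i) (qf T n (i+1))).indicator (fun _ => c i) with hf
  refine ⟨fun s => ∑ i ∈ Finset.range m, f i s, ?_, ?_⟩
  · refine memLp_finset_sum _ fun i _ => ?_
    rw [hf]
    exact memLp_indicator_const 2 measurableSet_Ico _ (Or.inr (measure_ne_top _ _))
  intro t htT
  have ht01 := hTsub htT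
  have hint : ∫ s in Ico (0:ℝ) t ∩ T, (∑ i ∈ Finset.range m, f i s) ∂(lamDelta T)
      = ∑ i ∈ Finset.range m, (c i) * (min (qf T n (i+1)) t - min (qf T n i) t) := by
    rw [integral_finset_sum _ (fun i _ => ?_)]
    · refine Finset.sum_congr rfl fun i _ => ?_
      rw [hf]
      exact term_integral hT hTsub h0T (qf_mem_T hT hTsub h0T h1T hnpos i)
        (qf_mem_T hT hTsub h0T h1T hnpos (i+1))
        (qf_mono hT hTsub h0T h1T hnpos (Nat.le_succ i)) htT (c i)
    · rw [hf]
      exact (integrable_const (c i)).indicator measurableSet_Ico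
  have hgoal : (∫ s in Ico (0:ℝ) t ∩ T,
      (fun s => ∑ i ∈ Finset.range m, f i s) s ∂(lamDelta T))
      = ∑ i ∈ Finset.range m, (c i) * (min (qf T n (i+1)) t - min (qf T n i) t) := hint
  rw [hgoal]
  -- locate t in the partition
  have hq0t : qf T n 0 ≤ t := by
    rw [qf_zero hT hTsub h0T h1T hnpos]; exact ht01.1
  set i₀ := Nat.findGreatest (fun i => qf T n i ≤ t) (m-1) with hi₀def
  have hi₀P : qf T n i₀ ≤ t := by
    have h := Nat.findGreatest_spec (P := fun i => qf T n i ≤ t) (Nat.zero_le (m-1)) hq0t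
    exact h
  have hi₀m : i₀ ≤ m - 1 := Nat.findGreatest_le _
  have hi₀lt : i₀ < m := by omega
  have hi₀M : i₀ + 1 < M := by omega
  have ht_le : t ≤ qf T n (i₀+1) := by
    rcases lt_or_eq_of_le hi₀m with hlt | heq
    · have hng := Nat.findGreatest_is_greatest (P := fun i => qf T n i ≤ t)
        (Nat.lt_succ_self i₀) (by omega)
      exact le_of_lt (not_le.mp hng)
    · have : i₀ + 1 = m := by omega
      rw [this, qf_last hT hTsub h0T h1T hnpos m (by omega)]
      exact ht01.2
  -- evaluate the sum
  have hsum : ∑ i ∈ Finset.range m, (c i) * (min (qf T n (i+1)) t - min (qf T n i) t)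
      = ω (qf T n i₀) + c i₀ * (t - qf T n i₀) := by
    rw [← Finset.sum_range_add_sum_Ico _ (show i₀+1 ≤ m from hi₀lt)]
    have h2 : ∀ i ∈ Finset.Ico (i₀+1) m,
        (c i) * (min (qf T n (i+1)) t - min (qf T n i) t) = 0 := by
      intro i hi
      have hii := (Finset.mem_Ico.mp hi).1
      have hqi : t ≤ qf T n i :=
        le_trans ht_le (qf_mono hT hTsub h0T h1T hnpos hii)
      have hqi1 : t ≤ qf T n (i+1) := le_trans hqi (qf_mono hT hTsub h0T h1T hnpos (Nat.le_succ i))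
      rw [min_eq_right hqi, min_eq_right hqi1, sub_self, mul_zero]
    rw [Finset.sum_eq_zero h2, add_zero, Finset.sum_range_succ]
    have h1 : ∀ i ∈ Finset.range i₀,
        (c i) * (min (qf T n (i+1)) t - min (qf T n i) t)
          = ω (qf T n (i+1)) - ω (qf T n i) := by
      intro i hi
      have hii : i < i₀ := Finset.mem_range.mp hi
      have hle1 : qf T n (i+1) ≤ t :=
        le_trans (qf_mono hT hTsub h0T h1T hnpos (by omega : i+1 ≤ i₀)) hi₀P
      have hle0 : qf T n i ≤ t :=
        le_trans (qf_mono hT hTsub h0T h1T hnpos (Nat.le_succ i)) hle1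
      have hstrict : qf T n i < qf T n (i+1) := qf_strict (by omega)
      rw [min_eq_left hle1, min_eq_left hle0]
      simp only [hc]
      exact div_mul_cancel₀ _ (by linarith : (0:ℝ) < qf T n (i+1) - qf T n i).ne'
    rw [Finset.sum_congr rfl h1, Finset.sum_range_sub (fun i => ω (qf T n i)),
      qf_zero hT hTsub h0T h1T hnpos, hω0, sub_zero,
      min_eq_right ht_le, min_eq_left hi₀P]
  rw [hsum]
  -- final estimate
  rcases eq_or_lt_of_le hi₀P with heq | hlt
  · rw [← heq]
    simp only [sub_self, mul_zero, add_zero, abs_zero]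
    exact hε
  rcases eq_or_lt_of_le ht_le with heq2 | hlt2
  · have hpos : (0:ℝ) < qf T n (i₀+1) - qf T n i₀ := by rw [← heq2]; linarith
    have hcval : c i₀ * (t - qf T n i₀) = ω (qf T n (i₀+1)) - ω (qf T n i₀) := by
      rw [hc, heq2]
      field_simp
    rw [hcval, heq2]
    simp only [add_sub_cancel]
    simpa using hε
  · have hgap : qf T n (i₀+1) - qf T n i₀ ≤ 1/n :=
      gap_lemma hT hTsub h0T h1T hnpos i₀ htT hlt hlt2
    have hpos : (0:ℝ) < qf T n (i₀+1) - qf T n i₀ := by linarith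
    have hgapδ : qf T n (i₀+1) - qf T n i₀ < δ := lt_of_le_of_lt hgap hinv
    have hest1 : |ω t - ω (qf T n i₀)| < ε/3 := by
      have := hδ t htT (qf T n i₀) (qf_mem_T hT hTsub h0T h1T hnpos i₀)
        (by rw [Real.dist_eq, abs_of_pos (by linarith : (0:ℝ) < t - qf T n i₀)]; linarith)
      rwa [Real.dist_eq] at this
    have hest2 : |ω (qf T n (i₀+1)) - ω (qf T n i₀)| < ε/3 := by
      have := hδ (qf T n (i₀+1)) (qf_mem_T hT hTsub h0T h1T hnpos (i₀+1))
        (qf T n i₀) (qf_mem_T hT hTsub h0T h1T hnpos i₀)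
        (by rw [Real.dist_eq, abs_of_pos hpos]; linarith)
      rwa [Real.dist_eq] at this
    have habs : |c i₀ * (t - qf T n i₀)| ≤ |ω (qf T n (i₀+1)) - ω (qf T n i₀)| := by
      rw [hc]
      simp only []
      rw [abs_mul, abs_div, abs_of_pos hpos,
        abs_of_pos (by linarith : (0:ℝ) < t - qf T n i₀), div_mul_eq_mul_div,
        div_le_iff₀ hpos]
      nlinarith [abs_nonneg (ω (qf T n (i₀+1)) - ω (qf T n i₀))]
    calc |ω t - (ω (qf T n i₀) + c i₀ * (t - qf T n i₀))|
        = |(ω t - ω (qf T n i₀)) - c i₀ * (t - qf T n i₀)| := by ring_nf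
    _ ≤ |ω t - ω (qf T n i₀)| + |c i₀ * (t - qf T n i₀)| := abs_sub _ _
    _ < ε := by linarith

theorem stmt_14 (T : Set ℝ) (hT : IsClosed T) (hTsub : T ⊆ Icc 0 1)
    (h0T : (0:ℝ) ∈ T) (h1T : (1:ℝ) ∈ T) :
    (∀ hΔ : ℝ → ℝ, MemLp hΔ 2 (lamDelta T) → ∀ t ∈ T,
      |∫ s in Ico (0:ℝ) t ∩ T, hΔ s ∂(lamDelta T)|
        ≤ Real.sqrt (∫ s, (hΔ s)^2 ∂(lamDelta T))) ∧
    (∀ ω : ℝ → ℝ, ContinuousOn ω T → ω 0 = 0 → ∀ ε > 0, ∃ hΔ : ℝ → ℝ,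
      MemLp hΔ 2 (lamDelta T) ∧
      ∀ t ∈ T, |ω t - ∫ s in Ico (0:ℝ) t ∩ T, hΔ s ∂(lamDelta T)| < ε) := by
  constructor
  · intro hΔ hmem t _
    exact part1_aux hT hTsub h0T hΔ hmem t
  · intro ω hω hω0 ε hε
    exact part2_aux hT hTsub h0T h1T ω hω hω0 ε hε
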